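/- Let Q be a topological directed set which is Hausdorff, DK (every down set ↓q = {q' ∈ Q : q' ≤ q} is compact), and has calibre (ω₁,ω). Then Q has countable extent: every closed discrete subset of Q is countable. -/
import Mathlib

open Cardinal Set

/-- A directed set has calibre `(ω₁,ω)` if every uncountable subset contains an
infinite subset which is bounded (has an upper bound). -/
def CalibreO1O (P : Type*) [Preorder P] : Prop :=
  ∀ S : Set P, ¬ S.Countable → ∃ T ⊆ S, T.Infinite ∧ BddAbove T

/-- a Hausdorff topological directed set in which every down set
is compact (DK) and which has calibre `(ω₁,ω)` has countable extent: every
closed discrete subset is countable. -/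
theorem hausdorff_DK_calibre_countable_extent {Q : Type*}
    [PartialOrder Q] [TopologicalSpace Q] [T2Space Q]
    (hdir : ∀ F : Set Q, F.Finite → BddAbove F)
    (hDK : ∀ q : Q, IsCompact (Set.Iic q))
    (hcal : CalibreO1O Q) :
    ∀ S : Set Q, IsClosed S → DiscreteTopology S → S.Countable := by
  intro S hS hdisc
  by_contra hunc
  obtain ⟨T, hTS, hTinf, q, hq⟩ := hcal S hunc
  have hTq : T ⊆ Set.Iic q := fun t ht => hq ht
  obtain ⟨x, -, hacc⟩ := hTinf.exists_accPt_of_subset_isCompact (hDK q) hTq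
  -- every punctured neighborhood of x meets T
  have hmeets : ∀ U ∈ nhds x, ∃ y, y ∈ U ∧ y ≠ x ∧ y ∈ T := by
    intro U hU
    have h1 : (U \ {x}) ∩ T ∈ nhdsWithin x {x}ᶜ ⊓ Filter.principal T :=
      Filter.inter_mem_inf (diff_mem_nhdsWithin_compl hU {x}) (Filter.mem_principal_self T)
    obtain ⟨y, hy⟩ := hacc.nonempty_of_mem h1
    exact ⟨y, hy.1.1, hy.1.2, hy.2⟩
  -- x ∈ S since S is closed
  have hxS : x ∈ S := by
    rw [← hS.closure_eq]
    rw [mem_closure_iff_nhds]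
    intro U hU
    obtain ⟨y, hyU, -, hyT⟩ := hmeets U hU
    exact ⟨y, hyU, hTS hyT⟩
  -- discreteness: singleton open in S
  have hopen : IsOpen ({⟨x, hxS⟩} : Set S) := isOpen_discrete _
  rw [isOpen_induced_iff] at hopen
  obtain ⟨U, hUopen, hUeq⟩ := hopen
  have hxU : x ∈ U := by
    have : (⟨x, hxS⟩ : S) ∈ (Subtype.val ⁻¹' U : Set S) := by
      rw [hUeq]; rfl
    exact this
  obtain ⟨y, hyU, hyne, hyT⟩ := hmeets U (hUopen.mem_nhds hxU)
  have : (⟨y, hTS hyT⟩ : S) ∈ (Subtype.val ⁻¹' U : Set S) := hyU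
  rw [hUeq] at this
  exact hyne (congrArg Subtype.val this)
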